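/- Let n = n_1 n_2 be a squarefree odd integer not divisible by 7 or 13, where n_1 = ∏_{i=1}^r p_i with primes p_i ≡ 1 (mod 3) and n_2 = ∏_{j=1}^s q_j with primes q_j ≡ 2 (mod 3). Let m ≥ 3ω(n_1) + 2ω(n_2) and let S = x_1,…,x_{m + 2Ω(n_1) + Ω(n_2)} be a sequence over Z/nZ. Then there exist a subsequence x_{i_1},…,x_{i_m} of S of length m and weights a_1,…,a_m ∈ T_n such that a_1 x_{i_1} + … + a_m x_{i_m} ≡ 0 (mod n). -/

import Mathlib

open Finset

open scoped Classical

/-- `Tset n` is the set of cubes of units in `ZMod n`. -/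
def Tset (n : ℕ) : Set (ZMod n) := {x | ∃ u : (ZMod n)ˣ, ((u : ZMod n)) ^ 3 = x}

/-- A family `x : ι → ZMod n` has a nonempty `A`-weighted zero-sum subsequence. -/
def HasWZS {n : ℕ} {ι : Type} (A : Set (ZMod n)) (x : ι → ZMod n) : Prop :=
  ∃ I : Finset ι, I.Nonempty ∧ ∃ a : ι → ZMod n, (∀ i ∈ I, a i ∈ A) ∧ ∑ i ∈ I, a i * x i = 0

/-- The weighted Davenport constant `D_A(ZMod n)`. -/
noncomputable def DavA (n : ℕ) (A : Set (ZMod n)) : ℕ :=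
  sInf {ℓ : ℕ | 0 < ℓ ∧ ∀ x : Fin ℓ → ZMod n, HasWZS A x}

/-- A family has an `A`-weighted zero-sum subsequence of length exactly `m`. -/
def HasWZSLen {n : ℕ} {ι : Type} (A : Set (ZMod n)) (x : ι → ZMod n) (m : ℕ) : Prop :=
  ∃ I : Finset ι, I.card = m ∧ ∃ a : ι → ZMod n, (∀ i ∈ I, a i ∈ A) ∧ ∑ i ∈ I, a i * x i = 0

/-- The constant `E_A(ZMod n)`. -/
noncomputable def EA (n : ℕ) (A : Set (ZMod n)) : ℕ :=
  sInf {ℓ : ℕ | 0 < ℓ ∧ ∀ x : Fin ℓ → ZMod n, HasWZSLen A x n}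

/-- An `A`-extremal sequence: length `D_A - 1` with no nonempty `A`-weighted zero-sum
subsequence. -/
def IsExtremal {n : ℕ} {ι : Type} [Fintype ι] (A : Set (ZMod n)) (x : ι → ZMod n) : Prop :=
  Fintype.card ι + 1 = DavA n A ∧ ¬ HasWZS A x

/-- `Omega n` is the number of prime factors of `n` counted with multiplicity. -/
def Omega (n : ℕ) : ℕ := n.primeFactorsList.length

lemma exists_cubic_char (p : ℕ) [Fact p.Prime] (hp3 : p % 3 = 1) :
    ∃ χ : MulChar (ZMod p) ℂ, χ ≠ 1 ∧ χ ^ 2 ≠ 1 ∧ χ ^ 3 = 1 ∧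
      ∀ x : ZMod p, x ≠ 0 → (χ x = 1 ↔ x ∈ Tset p) := by
  have hp := (Fact.out : p.Prime)
  have hp2 : 2 ≤ p := hp.two_le
  have h3 : 3 ∣ Fintype.card (ZMod p) - 1 := by
    rw [ZMod.card]; omega
  obtain ⟨χ, hχ⟩ := MulChar.exists_mulChar_orderOf (ZMod p) h3
      (Complex.isPrimitiveRoot_exp 3 (by norm_num))
  have h3' : χ ^ 3 = 1 := by rw [← hχ]; exact pow_orderOf_eq_one χ
  have hne : χ ≠ 1 := by
    intro h
    rw [h, orderOf_one] at hχ; omega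
  have h2 : χ ^ 2 ≠ 1 := by
    intro h
    have := orderOf_dvd_of_pow_eq_one h
    rw [hχ] at this; omega
  refine ⟨χ, hne, h2, h3', ?_⟩
  intro x hx
  constructor
  · -- χ x = 1 → x is a cube
    intro hx1
    obtain ⟨g, hg⟩ := IsCyclic.exists_generator (α := (ZMod p)ˣ)
    have hcoe : ∀ u : (ZMod p)ˣ, ((MulChar.equivToUnitHom χ) u : ℂ) = χ u :=
      fun u => MulChar.coe_equivToUnitHom χ u
    let φ : (ZMod p)ˣ →* ℂˣ := MulChar.equivToUnitHom χ
    have hz3 : φ g ^ 3 = 1 := by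
      ext
      rw [Units.val_pow_eq_pow_val, Units.val_one, hcoe,
        ← MulChar.pow_apply' χ (by norm_num : (3:ℕ) ≠ 0), h3', MulChar.one_apply_coe]
    have hzne : φ g ≠ 1 := by
      intro h
      apply hne
      rw [MulChar.eq_iff hg χ 1, MulChar.one_apply_coe, ← hcoe]
      rw [show (MulChar.equivToUnitHom χ) g = 1 from h, Units.val_one]
    have hordz : orderOf (φ g) = 3 := by
      have hdvd : orderOf (φ g) ∣ 3 := orderOf_dvd_of_pow_eq_one hz3
      rcases (Nat.dvd_prime (by norm_num : Nat.Prime 3)).mp hdvd with h | h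
      · exact absurd (orderOf_eq_one_iff.mp h) hzne
      · exact h
    have hxu : IsUnit x := isUnit_iff_ne_zero.mpr hx
    obtain ⟨k, hk⟩ := Subgroup.mem_zpowers_iff.mp (hg hxu.unit)
    have hφx : φ hxu.unit = 1 := by
      ext
      rw [Units.val_one]
      show ((MulChar.equivToUnitHom χ) hxu.unit : ℂ) = 1
      rw [hcoe, IsUnit.unit_spec, hx1]
    have hzk : φ g ^ k = 1 := by rw [← hφx, ← hk, map_zpow]
    have h3k : (3 : ℤ) ∣ k := by
      have := orderOf_dvd_iff_zpow_eq_one.mpr hzk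
      rw [hordz] at this
      exact_mod_cast this
    obtain ⟨a, rfl⟩ := h3k
    refine ⟨g ^ a, ?_⟩
    have : (g ^ a) ^ (3 : ℕ) = hxu.unit := by
      rw [← hk, ← zpow_natCast, ← zpow_mul]
      congr 1
      push_cast
      ring
    calc ((g ^ a : (ZMod p)ˣ) : ZMod p) ^ 3 = (((g ^ a) ^ (3:ℕ) : (ZMod p)ˣ) : ZMod p) := by
          rw [Units.val_pow_eq_pow_val]
      _ = x := by rw [this, IsUnit.unit_spec]
  · rintro ⟨u, rfl⟩
    rw [map_pow, ← MulChar.pow_apply' χ (by norm_num : (3:ℕ) ≠ 0), h3', MulChar.one_apply_coe]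


lemma lemmaH (p : ℕ) [Fact p.Prime] (hp3 : p % 3 = 1) (hp19 : 19 ≤ p)
    {c d t : ZMod p} (hc : c ≠ 0) (hd : d ≠ 0) (ht : t ≠ 0) :
    ∃ a b : ZMod p, a ∈ Tset p ∧ b ∈ Tset p ∧ c * a + d * b = t := by
  obtain ⟨χ, hne, h2, h3, hker⟩ := exists_cubic_char p hp3
  have hzero1 : ∀ x : ZMod p, x ≠ 0 → (1 : MulChar (ZMod p) ℂ) x = 1 := by
    intro x hx
    have := MulChar.one_apply_coe (R' := ℂ) (isUnit_iff_ne_zero.mpr hx).unit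
    simpa using this
  have hcube : ∀ x : ZMod p, x ≠ 0 → (χ x) ^ 3 = 1 := by
    intro x hx
    rw [← MulChar.pow_apply' χ (by norm_num : (3:ℕ) ≠ 0), h3, hzero1 x hx]
  have hnormχ : ∀ x : ZMod p, x ≠ 0 → ‖χ x‖ = 1 := by
    intro x hx
    have h := hcube x hx
    have h' : ‖χ x‖ ^ 3 = 1 := by rw [← norm_pow, h, norm_one]
    nlinarith [norm_nonneg (χ x), sq_nonneg (‖χ x‖ - 1), sq_nonneg (‖χ x‖ + 1)]
  have hnormpow : ∀ (j : ℕ) (x : ZMod p), x ≠ 0 → ‖(χ ^ j) x‖ = 1 := by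
    intro j x hx
    rcases Nat.eq_zero_or_pos j with hj | hj
    · rw [hj, pow_zero, hzero1 x hx, norm_one]
    · rw [MulChar.pow_apply' χ hj.ne' x, norm_pow, hnormχ x hx, one_pow]
  -- the indicator function f
  set f : ZMod p → ℂ := fun x => ∑ j ∈ range 3, (χ ^ j) x with hf
  have hf_ne : ∀ x : ZMod p, f x ≠ 0 → x ∈ Tset p := by
    intro x hfx
    have hx : x ≠ 0 := by
      rintro rfl
      apply hfx
      rw [hf]
      simp only
      apply Finset.sum_eq_zero
      intro j _
      exact MulChar.map_nonunit _ (by simpa using not_isUnit_zero)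
    by_contra hnc
    apply hfx
    have hχx : χ x ≠ 1 := fun h => hnc ((hker x hx).mp h)
    have : f x = ∑ j ∈ range 3, (χ x) ^ j := by
      rw [hf]
      simp only
      refine Finset.sum_congr rfl fun j hj => ?_
      rcases Nat.eq_zero_or_pos j with h0 | h0
      · rw [h0, pow_zero, pow_zero, hzero1 x hx]
      · rw [MulChar.pow_apply' χ h0.ne' x]
    rw [this, geom_sum_eq hχx, hcube x hx, sub_self, zero_div]
  have hf_cube : ∀ x : ZMod p, x ≠ 0 → x ∈ Tset p → f x = 3 := by
    intro x hx hxc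
    have hone : ∀ j ∈ range 3, (χ ^ j) x = 1 := by
      intro j _
      rcases Nat.eq_zero_or_pos j with h0 | h0
      · rw [h0, pow_zero, hzero1 x hx]
      · rw [MulChar.pow_apply' χ h0.ne' x, (hker x hx).mpr hxc, one_pow]
    rw [hf]
    simp only
    rw [Finset.sum_congr rfl hone]
    norm_num
  -- the sum S
  set S : ℂ := ∑ y : ZMod p, f (c⁻¹ * y) * f (d⁻¹ * (t - y)) with hS
  -- U j k
  set U : ℕ → ℕ → ℂ := fun j k => ∑ y : ZMod p, (χ ^ j) y * (χ ^ k) (t - y) with hU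
  have hexp : S = ∑ j ∈ range 3, ∑ k ∈ range 3,
      ((χ ^ j) c⁻¹ * (χ ^ k) d⁻¹) * U j k := by
    rw [hS]
    have : ∀ y : ZMod p, f (c⁻¹ * y) * f (d⁻¹ * (t - y)) =
        ∑ j ∈ range 3, ∑ k ∈ range 3,
          ((χ ^ j) c⁻¹ * (χ ^ k) d⁻¹) * ((χ ^ j) y * (χ ^ k) (t - y)) := by
      intro y
      rw [hf]
      simp only
      rw [Finset.sum_mul_sum]
      refine Finset.sum_congr rfl fun j _ => Finset.sum_congr rfl fun k _ => ?_
      rw [map_mul, map_mul]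
      ring
    rw [Finset.sum_congr rfl fun y _ => this y]
    rw [Finset.sum_comm]
    refine Finset.sum_congr rfl fun j _ => ?_
    rw [Finset.sum_comm]
    refine Finset.sum_congr rfl fun k _ => ?_
    rw [hU]
    simp only
    rw [Finset.mul_sum]
  -- value of U 0 0
  have hnot0 : ¬ IsUnit (0 : ZMod p) := by simpa using not_isUnit_zero
  have hU00 : U 0 0 = ((p - 2 : ℕ) : ℂ) := by
    rw [hU]
    simp only [pow_zero]
    have hterm : ∀ y : ZMod p, (1 : MulChar (ZMod p) ℂ) y * (1 : MulChar (ZMod p) ℂ) (t - y)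
        = if y = 0 ∨ y = t then 0 else 1 := by
      intro y
      by_cases h0 : y = 0
      · subst h0
        rw [MulChar.map_nonunit _ hnot0, zero_mul, if_pos (Or.inl rfl)]
      · by_cases ht' : y = t
        · subst ht'
          rw [sub_self, MulChar.map_nonunit _ hnot0, mul_zero, if_pos (Or.inr rfl)]
        · rw [hzero1 _ h0, hzero1 _ (sub_ne_zero.mpr (Ne.symm ht')), mul_one,
            if_neg (by tauto)]
    rw [Finset.sum_congr rfl fun y _ => hterm y]
    rw [Finset.sum_ite, Finset.sum_const_zero, Finset.sum_const, zero_add, nsmul_eq_mul, mul_one]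
    have hcard : (univ.filter fun y : ZMod p => ¬(y = 0 ∨ y = t)).card = p - 2 := by
      have hset : (univ.filter fun y : ZMod p => ¬(y = 0 ∨ y = t))
          = (univ \ {0, t} : Finset (ZMod p)) := by
        ext y
        simp [not_or]
      rw [hset, Finset.card_sdiff_of_subset (fun y _ => mem_univ y), Finset.card_univ, ZMod.card]
      congr 1
      rw [Finset.card_insert_of_notMem (by simp [Ne.symm ht]), Finset.card_singleton]
    rw [hcard]
  -- value of U j 0 for nontrivial χ^j
  have hUj0 : ∀ j : ℕ, χ ^ j ≠ 1 → U j 0 = -((χ ^ j) t) := by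
    intro j hj
    rw [hU]
    simp only [pow_zero]
    have hterm : ∀ y : ZMod p, (χ ^ j) y * (1 : MulChar (ZMod p) ℂ) (t - y)
        = if y = t then 0 else (χ ^ j) y := by
      intro y
      by_cases hy : y = t
      · subst hy
        rw [sub_self, MulChar.map_nonunit _ hnot0, mul_zero, if_pos rfl]
      · rw [hzero1 _ (sub_ne_zero.mpr (Ne.symm hy)), mul_one, if_neg hy]
    rw [Finset.sum_congr rfl fun y _ => hterm y]
    have e2 := Finset.add_sum_erase univ (fun y : ZMod p => if y = t then (0:ℂ) else (χ ^ j) y)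
      (mem_univ t)
    have e3 := Finset.add_sum_erase univ (fun y : ZMod p => (χ ^ j) y) (mem_univ t)
    have e1 : ∑ y ∈ univ.erase t, (if y = t then (0:ℂ) else (χ ^ j) y)
        = ∑ y ∈ univ.erase t, (χ ^ j) y :=
      Finset.sum_congr rfl (fun y hy => if_neg (Finset.ne_of_mem_erase hy))
    have e4 : ∑ y : ZMod p, (χ ^ j) y = 0 := MulChar.sum_eq_zero_of_ne_one hj
    rw [e4] at e3
    beta_reduce at e2 e3
    rw [← e2, e1, if_pos rfl, zero_add]
    linear_combination e3
  -- value of U 0 k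
  have hU0k : ∀ k : ℕ, χ ^ k ≠ 1 → U 0 k = -((χ ^ k) t) := by
    intro k hk
    rw [hU]
    simp only [pow_zero]
    have hterm : ∀ y : ZMod p, (1 : MulChar (ZMod p) ℂ) y * (χ ^ k) (t - y)
        = if y = 0 then 0 else (χ ^ k) (t - y) := by
      intro y
      by_cases hy : y = 0
      · subst hy
        rw [MulChar.map_nonunit _ hnot0, zero_mul, if_pos rfl]
      · rw [hzero1 _ hy, one_mul, if_neg hy]
    rw [Finset.sum_congr rfl fun y _ => hterm y]
    have e2 := Finset.add_sum_erase univ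
      (fun y : ZMod p => if y = 0 then (0:ℂ) else (χ ^ k) (t - y)) (mem_univ 0)
    have e3 := Finset.add_sum_erase univ (fun y : ZMod p => (χ ^ k) (t - y)) (mem_univ 0)
    have e1 : ∑ y ∈ univ.erase 0, (if y = (0 : ZMod p) then (0:ℂ) else (χ ^ k) (t - y))
        = ∑ y ∈ univ.erase 0, (χ ^ k) (t - y) :=
      Finset.sum_congr rfl (fun y hy => if_neg (Finset.ne_of_mem_erase hy))
    have e4 : ∑ y : ZMod p, (χ ^ k) (t - y) = 0 := by
      rw [show ∑ y : ZMod p, (χ ^ k) (t - y) = ∑ z : ZMod p, (χ ^ k) z from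
        Fintype.sum_equiv (Equiv.subLeft t) _ _ (fun y => rfl)]
      exact MulChar.sum_eq_zero_of_ne_one hk
    rw [e4] at e3
    beta_reduce at e2 e3
    rw [← e2, e1, if_pos rfl, zero_add]
    rw [sub_zero] at e3
    linear_combination e3
  -- U j k via Jacobi sums
  have hUjk : ∀ j k : ℕ, U j k = (χ ^ j) t * (χ ^ k) t * jacobiSum (χ ^ j) (χ ^ k) := by
    intro j k
    rw [hU]
    simp only
    rw [show ∑ y : ZMod p, (χ ^ j) y * (χ ^ k) (t - y)
        = ∑ w : ZMod p, (χ ^ j) (t * w) * (χ ^ k) (t - t * w) from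
      (Fintype.sum_equiv (Equiv.mulLeft₀ t ht)
        (fun w => (χ ^ j) (t * w) * (χ ^ k) (t - t * w))
        (fun y => (χ ^ j) y * (χ ^ k) (t - y)) (fun w => rfl)).symm]
    rw [jacobiSum, Finset.mul_sum]
    refine Finset.sum_congr rfl fun w _ => ?_
    rw [show t - t * w = t * (1 - w) by ring, map_mul, map_mul]
    ring
  -- norms of Jacobi sums
  have hcharne : ringChar ℂ ≠ ringChar (ZMod p) := by
    rw [ringChar.eq_zero, ZMod.ringChar_zmod_n]
    exact fun h => (Fact.out : p.Prime).ne_zero h.symm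
  have hJsq : ∀ ψ : MulChar (ZMod p) ℂ, ψ ≠ 1 → ψ * ψ ≠ 1 → ‖jacobiSum ψ ψ‖ ^ 2 = p := by
    intro ψ hψ1 hψψ
    have hmul := jacobiSum_mul_jacobiSum_inv hcharne hψ1 hψ1 hψψ
    have hstar : jacobiSum ψ⁻¹ ψ⁻¹ = (starRingEnd ℂ) (jacobiSum ψ ψ) := by
      rw [← MulChar.star_eq_inv ψ]
      exact (jacobiSum_ringHomComp ψ ψ (starRingEnd ℂ))
    rw [hstar, Complex.mul_conj, ZMod.card] at hmul
    have : Complex.normSq (jacobiSum ψ ψ) = (p : ℝ) := by exact_mod_cast hmul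
    rw [← this, Complex.sq_norm]
  have hχ2 : χ * χ = χ ^ 2 := (sq χ).symm
  have hs1 : ‖jacobiSum χ χ‖ ^ 2 = p := hJsq χ hne (by rw [hχ2]; exact h2)
  have hs2 : ‖jacobiSum (χ ^ 2) (χ ^ 2)‖ ^ 2 = p := by
    refine hJsq (χ ^ 2) h2 ?_
    rw [← pow_add]
    show χ ^ 4 ≠ 1
    have : χ ^ 4 = χ := by
      rw [show (4:ℕ) = 3 + 1 by norm_num, pow_add, h3, one_mul, pow_one]
    rw [this]
    exact hne
  have hneg1 : (-1 : ZMod p) ≠ 0 := neg_ne_zero.mpr one_ne_zero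
  have hinv2 : χ ^ 2 = χ⁻¹ := by
    refine eq_inv_of_mul_eq_one_right ?_
    rw [← pow_succ']
    exact h3
  have hJ12 : ‖jacobiSum χ (χ ^ 2)‖ = 1 := by
    rw [hinv2, jacobiSum_nontrivial_inv hne, norm_neg, hnormχ _ hneg1]
  have hJ21 : ‖jacobiSum (χ ^ 2) χ‖ = 1 := by
    rw [jacobiSum_comm, hJ12]
  -- uniform bound helper
  have hcinv : (c⁻¹ : ZMod p) ≠ 0 := inv_ne_zero hc
  have hdinv : (d⁻¹ : ZMod p) ≠ 0 := inv_ne_zero hd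
  have hb : ∀ (j k : ℕ) (bU : ℝ), ‖U j k‖ ≤ bU →
      ‖(χ ^ j) c⁻¹ * (χ ^ k) d⁻¹ * U j k‖ ≤ bU := by
    intro j k bU hbU
    rw [norm_mul, norm_mul, hnormpow j _ hcinv, hnormpow k _ hdinv, one_mul, one_mul]
    exact hbU
  -- norm bounds on the U's
  have hUnorm_jk : ∀ j k : ℕ, ‖U j k‖ = ‖jacobiSum (χ ^ j) (χ ^ k)‖ := by
    intro j k
    rw [hUjk j k, norm_mul, norm_mul, hnormpow j _ ht, hnormpow k _ ht, one_mul, one_mul]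
  have hb01 : ‖U 0 1‖ ≤ 1 := by
    rw [hU0k 1 (by rw [pow_one]; exact hne), norm_neg, hnormpow 1 _ ht]
  have hb02 : ‖U 0 2‖ ≤ 1 := by rw [hU0k 2 h2, norm_neg, hnormpow 2 _ ht]
  have hb10 : ‖U 1 0‖ ≤ 1 := by
    rw [hUj0 1 (by rw [pow_one]; exact hne), norm_neg, hnormpow 1 _ ht]
  have hb20 : ‖U 2 0‖ ≤ 1 := by rw [hUj0 2 h2, norm_neg, hnormpow 2 _ ht]
  have hb12 : ‖U 1 2‖ ≤ 1 := by
    rw [hUnorm_jk 1 2, pow_one, hJ12]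
  have hb21 : ‖U 2 1‖ ≤ 1 := by
    rw [hUnorm_jk 2 1, pow_one, hJ21]
  have hb11 : ‖U 1 1‖ ≤ ‖jacobiSum χ χ‖ := by
    rw [hUnorm_jk 1 1, pow_one]
  have hb22 : ‖U 2 2‖ ≤ ‖jacobiSum (χ ^ 2) (χ ^ 2)‖ := by rw [hUnorm_jk 2 2]
  -- explicit 9-term expansion
  have hexp' : S = (χ ^ 0) c⁻¹ * (χ ^ 0) d⁻¹ * U 0 0
      + ((χ ^ 0) c⁻¹ * (χ ^ 1) d⁻¹ * U 0 1 + (χ ^ 0) c⁻¹ * (χ ^ 2) d⁻¹ * U 0 2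
      + ((χ ^ 1) c⁻¹ * (χ ^ 0) d⁻¹ * U 1 0 + (χ ^ 1) c⁻¹ * (χ ^ 1) d⁻¹ * U 1 1
      + ((χ ^ 1) c⁻¹ * (χ ^ 2) d⁻¹ * U 1 2 + (χ ^ 2) c⁻¹ * (χ ^ 0) d⁻¹ * U 2 0
      + ((χ ^ 2) c⁻¹ * (χ ^ 1) d⁻¹ * U 2 1 + (χ ^ 2) c⁻¹ * (χ ^ 2) d⁻¹ * U 2 2)))) := by
    rw [hexp]
    simp only [Finset.sum_range_succ, Finset.sum_range_zero, zero_add]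
    ring
  have hcoe0 : (χ ^ 0) c⁻¹ * (χ ^ 0) d⁻¹ * U 0 0 = U 0 0 := by
    rw [pow_zero, hzero1 _ hcinv, hzero1 _ hdinv, one_mul, one_mul]
  -- S ≠ 0
  have hSne : S ≠ 0 := by
    intro hS0
    have hU00' : U 0 0 = -((χ ^ 0) c⁻¹ * (χ ^ 1) d⁻¹ * U 0 1 + (χ ^ 0) c⁻¹ * (χ ^ 2) d⁻¹ * U 0 2
      + ((χ ^ 1) c⁻¹ * (χ ^ 0) d⁻¹ * U 1 0 + (χ ^ 1) c⁻¹ * (χ ^ 1) d⁻¹ * U 1 1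
      + ((χ ^ 1) c⁻¹ * (χ ^ 2) d⁻¹ * U 1 2 + (χ ^ 2) c⁻¹ * (χ ^ 0) d⁻¹ * U 2 0
      + ((χ ^ 2) c⁻¹ * (χ ^ 1) d⁻¹ * U 2 1 + (χ ^ 2) c⁻¹ * (χ ^ 2) d⁻¹ * U 2 2)))) := by
      rw [hexp', hcoe0] at hS0
      linear_combination hS0
    have hnorm00 : ‖U 0 0‖ = ((p : ℝ) - 2) := by
      rw [hU00]
      rw [Complex.norm_natCast]
      have : (2:ℕ) ≤ p := (Fact.out : p.Prime).two_le
      push_cast [Nat.cast_sub this]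
      ring
    set s1 := ‖jacobiSum χ χ‖ with hs1d
    set s2 := ‖jacobiSum (χ ^ 2) (χ ^ 2)‖ with hs2d
    have hbound : ‖U 0 0‖ ≤ (1 + 1) + ((1 + s1) + ((1 + 1) + (1 + s2))) := by
      rw [hU00']
      rw [norm_neg]
      refine le_trans (norm_add_le _ _) (add_le_add ?_ ?_)
      · exact le_trans (norm_add_le _ _) (add_le_add (hb 0 1 1 hb01) (hb 0 2 1 hb02))
      refine le_trans (norm_add_le _ _) (add_le_add ?_ ?_)
      · exact le_trans (norm_add_le _ _) (add_le_add (hb 1 0 1 hb10) (hb 1 1 s1 hb11))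
      refine le_trans (norm_add_le _ _) (add_le_add ?_ ?_)
      · exact le_trans (norm_add_le _ _) (add_le_add (hb 1 2 1 hb12) (hb 2 0 1 hb20))
      exact le_trans (norm_add_le _ _) (add_le_add (hb 2 1 1 hb21) (hb 2 2 s2 hb22))
    rw [hnorm00] at hbound
    have hp' : (19 : ℝ) ≤ (p : ℝ) := by exact_mod_cast hp19
    have hs1nn : 0 ≤ s1 := norm_nonneg _
    have hs2nn : 0 ≤ s2 := norm_nonneg _
    nlinarith [sq_nonneg (s1 - 4), sq_nonneg (s2 - 4), hs1, hs2]
  -- extract the witness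
  have hwit : ∃ y : ZMod p, f (c⁻¹ * y) * f (d⁻¹ * (t - y)) ≠ 0 := by
    by_contra hall
    push_neg at hall
    exact hSne (by rw [hS]; exact Finset.sum_eq_zero fun y _ => hall y)
  obtain ⟨y, hy⟩ := hwit
  refine ⟨c⁻¹ * y, d⁻¹ * (t - y), hf_ne _ (left_ne_zero_of_mul hy),
    hf_ne _ (right_ne_zero_of_mul hy), ?_⟩
  field_simp
  ring


lemma one_mem_Tset (n : ℕ) : (1 : ZMod n) ∈ Tset n := ⟨1, by simp⟩

/-- mod q ≡ 2 (mod 3): every unit is a cube. -/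
lemma Tset_of_ne_zero (q : ℕ) [Fact q.Prime] (hq : q % 3 = 2) (x : ZMod q) (hx : x ≠ 0) :
    x ∈ Tset q := by
  have hcop : (Nat.card (ZMod q)ˣ).Coprime 3 := by
    have hcard : Nat.card (ZMod q)ˣ = q - 1 := by
      rw [Nat.card_eq_fintype_card, ZMod.card_units_eq_totient,
        Nat.totient_prime (Fact.out : q.Prime)]
    rw [hcard, Nat.coprime_comm]
    refine (Nat.Prime.coprime_iff_not_dvd (by norm_num)).mpr ?_
    have := (Fact.out : q.Prime).two_le
    omega
  obtain ⟨u, hu⟩ := hcop.pow_left_bijective.surjective (isUnit_iff_ne_zero.mpr hx).unit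
  simp only at hu
  exact ⟨u, by rw [← Units.val_pow_eq_pow_val, hu, IsUnit.unit_spec]⟩

/-- Solvability mod a prime `q ≡ 2 (mod 3)`. -/
lemma solv2 (q : ℕ) [Fact q.Prime] (hq : q % 3 = 2) (hq5 : 5 ≤ q) {ι : Type} [DecidableEq ι]
    (I : Finset ι) (y : ι → ZMod q)
    (hcnt : (I.filter (fun i => y i ≠ 0)).card = 0 ∨ 2 ≤ (I.filter (fun i => y i ≠ 0)).card) :
    ∃ a : ι → ZMod q, (∀ i ∈ I, a i ∈ Tset q) ∧ ∑ i ∈ I, a i * y i = 0 := by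
  rcases hcnt with h0 | h2
  · refine ⟨fun _ => 1, fun i _ => one_mem_Tset q, ?_⟩
    rw [Finset.card_eq_zero] at h0
    refine Finset.sum_eq_zero fun i hi => ?_
    have : y i = 0 := by
      by_contra hne
      exact absurd (Finset.mem_filter.mpr ⟨hi, hne⟩) (by rw [h0]; simp)
    rw [this, mul_zero]
  · obtain ⟨i, hi, j, hj, hij⟩ := Finset.one_lt_card.mp h2
    obtain ⟨hiI, hyi⟩ := Finset.mem_filter.mp hi
    obtain ⟨hjI, hyj⟩ := Finset.mem_filter.mp hj
    set t0 : ZMod q := ∑ k ∈ (I.erase i).erase j, y k with ht0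
    -- pick s ∉ {0, -t0}
    have hex : ∃ s : ZMod q, s ∉ ({0, -t0} : Finset (ZMod q)) := by
      have hcard : ({0, -t0} : Finset (ZMod q)).card < Fintype.card (ZMod q) := by
        refine lt_of_le_of_lt (Finset.card_insert_le _ _) ?_
        rw [Finset.card_singleton, ZMod.card]
        omega
      by_contra hall
      push_neg at hall
      have : (univ : Finset (ZMod q)) ⊆ {0, -t0} := fun s _ => hall s
      exact absurd (Finset.card_le_card this) (by rw [Finset.card_univ]; omega)
    obtain ⟨s, hs⟩ := hex
    simp only [Finset.mem_insert, Finset.mem_singleton, not_or] at hs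
    obtain ⟨hs0, hst⟩ := hs
    set a : ι → ZMod q := fun k =>
      if k = i then s * (y i)⁻¹ else if k = j then (-t0 - s) * (y j)⁻¹ else 1 with ha
    refine ⟨a, ?_, ?_⟩
    · intro k _
      simp only [ha]
      by_cases h1 : k = i
      · rw [if_pos h1]
        exact Tset_of_ne_zero q hq _ (mul_ne_zero hs0 (inv_ne_zero hyi))
      · rw [if_neg h1]
        by_cases h2' : k = j
        · rw [if_pos h2']
          refine Tset_of_ne_zero q hq _ (mul_ne_zero ?_ (inv_ne_zero hyj))
          intro h
          exact hst (sub_eq_zero.mp h).symm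
        · rw [if_neg h2']
          exact one_mem_Tset q
    · rw [← Finset.add_sum_erase I _ hiI, ← Finset.add_sum_erase (I.erase i) _
        (Finset.mem_erase.mpr ⟨fun h => hij (h ▸ rfl), hjI⟩)]
      have hrest : ∑ k ∈ (I.erase i).erase j, a k * y k = t0 := by
        rw [ht0]
        refine Finset.sum_congr rfl fun k hk => ?_
        obtain ⟨hkj, hk'⟩ := Finset.mem_erase.mp hk
        obtain ⟨hki, _⟩ := Finset.mem_erase.mp hk'
        simp only [ha, if_neg hki, if_neg hkj, one_mul]
      rw [hrest]
      simp only [ha]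
      simp only [if_true, if_neg hij, if_neg hij.symm]
      rw [mul_assoc, inv_mul_cancel₀ hyi, mul_one, mul_assoc, inv_mul_cancel₀ hyj, mul_one]
      ring

/-- Solvability mod a prime `p ≡ 1 (mod 3)`, `p ≥ 19`. -/
lemma solv1 (p : ℕ) [Fact p.Prime] (hp3 : p % 3 = 1) (hp19 : 19 ≤ p) {ι : Type} [DecidableEq ι]
    (I : Finset ι) (y : ι → ZMod p)
    (hcnt : (I.filter (fun i => y i ≠ 0)).card = 0 ∨ 3 ≤ (I.filter (fun i => y i ≠ 0)).card) :
    ∃ a : ι → ZMod p, (∀ i ∈ I, a i ∈ Tset p) ∧ ∑ i ∈ I, a i * y i = 0 := by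
  rcases hcnt with h0 | h3
  · refine ⟨fun _ => 1, fun i _ => one_mem_Tset p, ?_⟩
    rw [Finset.card_eq_zero] at h0
    refine Finset.sum_eq_zero fun i hi => ?_
    have : y i = 0 := by
      by_contra hne
      exact absurd (Finset.mem_filter.mpr ⟨hi, hne⟩) (by rw [h0]; simp)
    rw [this, mul_zero]
  · -- pick three distinct indices with nonzero values
    set F := I.filter (fun i => y i ≠ 0) with hF
    obtain ⟨i, hi⟩ := Finset.card_pos.mp (by omega : 0 < F.card)
    have h2 : 0 < (F.erase i).card := by
      have := Finset.card_erase_of_mem hi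
      omega
    obtain ⟨j, hj⟩ := Finset.card_pos.mp h2
    have h1 : 0 < ((F.erase i).erase j).card := by
      have e1 := Finset.card_erase_of_mem hi
      have e2 := Finset.card_erase_of_mem hj
      omega
    obtain ⟨k, hk⟩ := Finset.card_pos.mp h1
    obtain ⟨hkj, hk2⟩ := Finset.mem_erase.mp hk
    obtain ⟨hki, hkF⟩ := Finset.mem_erase.mp hk2
    obtain ⟨hji, hjF⟩ := Finset.mem_erase.mp hj
    have hyi : y i ≠ 0 := (Finset.mem_filter.mp hi).2
    have hyj : y j ≠ 0 := (Finset.mem_filter.mp hjF).2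
    have hyk : y k ≠ 0 := (Finset.mem_filter.mp hkF).2
    have hiI : i ∈ I := (Finset.mem_filter.mp hi).1
    have hjI : j ∈ I := (Finset.mem_filter.mp hjF).1
    have hkI : k ∈ I := (Finset.mem_filter.mp hkF).1
    -- sum over the rest
    set t0 : ZMod p := ∑ l ∈ ((I.erase i).erase j).erase k, y l with ht0
    -- a second cube ≠ 1
    obtain ⟨g, hg⟩ := IsCyclic.exists_generator (α := (ZMod p)ˣ)
    have hord : orderOf g = p - 1 := by
      rw [orderOf_eq_card_of_forall_mem_zpowers hg, Nat.card_eq_fintype_card,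
        ZMod.card_units_eq_totient, Nat.totient_prime (Fact.out : p.Prime)]
    have hg3 : ((g : ZMod p)) ^ 3 ≠ 1 := by
      intro h
      have : (g ^ (3:ℕ) : (ZMod p)ˣ) = 1 := by
        ext
        rw [Units.val_pow_eq_pow_val, h, Units.val_one]
      have := orderOf_dvd_of_pow_eq_one this
      rw [hord] at this
      have := Nat.le_of_dvd (by norm_num) this
      omega
    -- choose γ ∈ {1, g^3} with -t0 - γ * y k ≠ 0
    have hγ : ∃ γ : ZMod p, γ ∈ Tset p ∧ -t0 - γ * y k ≠ 0 := by
      by_cases hone : -t0 - 1 * y k ≠ 0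
      · exact ⟨1, one_mem_Tset p, hone⟩
      · push_neg at hone
        refine ⟨(g : ZMod p) ^ 3, ⟨g, rfl⟩, ?_⟩
        intro h
        have : ((g : ZMod p) ^ 3 - 1) * y k = 0 := by linear_combination hone - h
        rcases mul_eq_zero.mp this with h' | h'
        · exact hg3 (by linear_combination h')
        · exact hyk h'
    obtain ⟨γ, hγT, hγne⟩ := hγ
    obtain ⟨a', b', ha', hb', hab⟩ := lemmaH p hp3 hp19 hyi hyj hγne
    set a : ι → ZMod p := fun l =>
      if l = i then a' else if l = j then b' else if l = k then γ else 1 with ha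
    refine ⟨a, ?_, ?_⟩
    · intro l _
      simp only [ha]
      by_cases h1' : l = i
      · rw [if_pos h1']; exact ha'
      · rw [if_neg h1']
        by_cases h2' : l = j
        · rw [if_pos h2']; exact hb'
        · rw [if_neg h2']
          by_cases h3' : l = k
          · rw [if_pos h3']; exact hγT
          · rw [if_neg h3']; exact one_mem_Tset p
    · rw [← Finset.add_sum_erase I _ hiI,
        ← Finset.add_sum_erase (I.erase i) _ (Finset.mem_erase.mpr ⟨hji, hjI⟩),
        ← Finset.add_sum_erase ((I.erase i).erase j) _
          (Finset.mem_erase.mpr ⟨hkj, Finset.mem_erase.mpr ⟨hki, hkI⟩⟩)]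
      have hrest : ∑ l ∈ (((I.erase i).erase j).erase k), a l * y l = t0 := by
        rw [ht0]
        refine Finset.sum_congr rfl fun l hl => ?_
        obtain ⟨hlk, hl'⟩ := Finset.mem_erase.mp hl
        obtain ⟨hlj, hl''⟩ := Finset.mem_erase.mp hl'
        obtain ⟨hli, _⟩ := Finset.mem_erase.mp hl''
        simp only [ha, if_neg hli, if_neg hlj, if_neg hlk, one_mul]
      rw [hrest]
      simp only [ha, if_true, if_neg hji, if_neg hki, if_neg hkj]
      linear_combination hab


section Comb

variable {ι : Type} [DecidableEq ι] [Fintype ι]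

/-- Kill phase: repeatedly absorb small `U p` into `D`. -/
lemma kill_phase (U : ℕ → Finset ι) (e : ℕ → ℕ) (P : Finset ℕ) :
    ∀ (kk : ℕ) (A : Finset ℕ) (D : Finset ι), A.card ≤ kk → A ⊆ P →
    (∀ p ∈ P \ A, U p ⊆ D) → D.card ≤ ∑ p ∈ P \ A, e p →
    ∃ (D' : Finset ι) (A' : Finset ℕ), A' ⊆ A ∧ D ⊆ D' ∧
      (∀ p ∈ P \ A', U p ⊆ D') ∧ D'.card ≤ ∑ p ∈ P \ A', e p ∧
      (∀ p ∈ A', e p + 1 ≤ (U p \ D').card) := by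
  intro kk
  induction kk with
  | zero =>
    intro A D hA hAP hkill hcard
    have hA0 : A = ∅ := Finset.card_eq_zero.mp (Nat.le_zero.mp hA)
    exact ⟨D, A, Finset.Subset.refl A, Finset.Subset.refl D, hkill, hcard,
      by rw [hA0]; intro p hp; simp at hp⟩
  | succ k ih =>
    intro A D hA hAP hkill hcard
    by_cases hbad : ∃ p ∈ A, (U p \ D).card ≤ e p
    · obtain ⟨p, hpA, hpe⟩ := hbad
      have hpP : p ∈ P := hAP hpA
      have hcard' : (D ∪ (U p \ D)).card ≤ ∑ q ∈ P \ A.erase p, e q := by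
        have hdisj : Disjoint D (U p \ D) := Finset.disjoint_sdiff
        rw [Finset.card_union_of_disjoint hdisj]
        have hins : P \ A.erase p = insert p (P \ A) := by
          ext q
          simp only [Finset.mem_sdiff, Finset.mem_erase, Finset.mem_insert, not_and]
          constructor
          · rintro ⟨hqP, hq⟩
            by_cases hqp : q = p
            · exact Or.inl hqp
            · exact Or.inr ⟨hqP, hq hqp⟩
          · rintro (rfl | ⟨hqP, hqA⟩)
            · exact ⟨hpP, fun h => absurd rfl h⟩
            · exact ⟨hqP, fun _ => hqA⟩
        rw [hins, Finset.sum_insert (by simp [hpA])]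
        omega
      have hAcard : (A.erase p).card ≤ k := by
        have := Finset.card_erase_of_mem hpA
        have hpos : 1 ≤ A.card := Finset.card_pos.mpr ⟨p, hpA⟩
        omega
      have hkill' : ∀ q ∈ P \ A.erase p, U q ⊆ D ∪ (U p \ D) := by
        intro q hq x hx
        by_cases hqp : q = p
        · subst hqp
          by_cases hxD : x ∈ D
          · exact Finset.mem_union_left _ hxD
          · exact Finset.mem_union_right _ (Finset.mem_sdiff.mpr ⟨hx, hxD⟩)
        · have hq' : q ∈ P \ A := by
            obtain ⟨hqP, hqe⟩ := Finset.mem_sdiff.mp hq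
            refine Finset.mem_sdiff.mpr ⟨hqP, fun hqA => hqe (Finset.mem_erase.mpr ⟨hqp, hqA⟩)⟩
          exact Finset.mem_union_left _ (hkill q hq' hx)
      obtain ⟨D', A', hA'sub, hDsub, hk', hc', hsafe'⟩ :=
        ih (A.erase p) (D ∪ (U p \ D)) hAcard ((Finset.erase_subset p A).trans hAP)
          hkill' hcard'
      exact ⟨D', A', hA'sub.trans (Finset.erase_subset p A), Finset.subset_union_left.trans hDsub,
        hk', hc', hsafe'⟩
    · push_neg at hbad
      exact ⟨D, A, Finset.Subset.refl A, Finset.Subset.refl D, hkill, hcard,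
        fun p hp => hbad p hp⟩


lemma pad_phase (U : ℕ → Finset ι) (e : ℕ → ℕ) (P : Finset ℕ) (m d : ℕ)
    (hsize : m + d ≤ Fintype.card ι) (hm : ∑ p ∈ P, (e p + 1) ≤ m) :
    ∀ (r : ℕ) (D : Finset ι) (A : Finset ℕ), A ⊆ P →
    (∀ p ∈ A, e p + 1 ≤ (U p \ D).card) → (∀ p ∈ P \ A, U p ⊆ D) →
    D.card + r = d →
    ∃ D' : Finset ι, D ⊆ D' ∧ D'.card = d ∧
      (∀ p ∈ A, e p + 1 ≤ (U p \ D').card) ∧ (∀ p ∈ P \ A, U p ⊆ D') := by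
  intro r
  induction r with
  | zero =>
    exact fun D A _ hsafe hkill hcard =>
      ⟨D, Finset.Subset.refl D, by omega, hsafe, hkill⟩
  | succ r ih =>
    intro D A hAP hsafe hkill hcard
    set M := A.filter (fun p => (U p \ D).card = e p + 1) with hM
    set Bad := D ∪ M.biUnion (fun p => U p \ D) with hBad
    have hBadcard : Bad.card < Fintype.card ι := by
      have h1 : Bad.card ≤ D.card + (M.biUnion (fun p => U p \ D)).card :=
        Finset.card_union_le _ _
      have h2 : (M.biUnion (fun p => U p \ D)).card ≤ ∑ p ∈ M, (U p \ D).card :=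
        Finset.card_biUnion_le
      have h3 : ∑ p ∈ M, (U p \ D).card = ∑ p ∈ M, (e p + 1) :=
        Finset.sum_congr rfl fun p hp => (Finset.mem_filter.mp hp).2
      have h4 : ∑ p ∈ M, (e p + 1) ≤ ∑ p ∈ P, (e p + 1) :=
        Finset.sum_le_sum_of_subset ((Finset.filter_subset _ A).trans hAP)
      omega
    have hex : ∃ x : ι, x ∉ Bad := by
      by_contra hall
      push_neg at hall
      have : (univ : Finset ι) ⊆ Bad := fun x _ => hall x
      exact absurd (Finset.card_le_card this) (by rw [Finset.card_univ]; omega)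
    obtain ⟨x, hx⟩ := hex
    have hxD : x ∉ D := fun h => hx (Finset.mem_union_left _ h)
    have hsafe' : ∀ p ∈ A, e p + 1 ≤ (U p \ insert x D).card := by
      intro p hp
      have hrw : U p \ insert x D = (U p \ D).erase x := by
        ext z
        simp only [Finset.mem_sdiff, Finset.mem_insert, Finset.mem_erase, not_or]
        tauto
      rw [hrw]
      by_cases hpM : p ∈ M
      · have hxU : x ∉ U p \ D := fun h =>
          hx (Finset.mem_union_right _ (Finset.mem_biUnion.mpr ⟨p, hpM, h⟩))
        rw [Finset.erase_eq_of_notMem hxU]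
        exact hsafe p hp
      · have hne : (U p \ D).card ≠ e p + 1 := fun h => hpM (Finset.mem_filter.mpr ⟨hp, h⟩)
        have hge := hsafe p hp
        have := Finset.pred_card_le_card_erase (s := U p \ D) (a := x)
        omega
    have hkill' : ∀ p ∈ P \ A, U p ⊆ insert x D := fun p hp =>
      (hkill p hp).trans (Finset.subset_insert x D)
    have hcard' : (insert x D).card + r = d := by
      rw [Finset.card_insert_of_notMem hxD]
      omega
    obtain ⟨D', h1, h2, h3, h4⟩ := ih (insert x D) A hAP hsafe' hkill' hcard'
    exact ⟨D', (Finset.subset_insert x D).trans h1, h2, h3, h4⟩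

/-- The discard lemma: we can discard exactly `d` indices so that for each `p`,
either all of `U p` is discarded or at least `e p + 1` survive. -/
lemma discard_lemma (U : ℕ → Finset ι) (e : ℕ → ℕ) (P : Finset ℕ) (m d : ℕ)
    (hd : d = ∑ p ∈ P, e p) (hm : ∑ p ∈ P, (e p + 1) ≤ m)
    (hsize : m + d ≤ Fintype.card ι) :
    ∃ D : Finset ι, D.card = d ∧ ∀ p ∈ P,
      (U p \ D = ∅) ∨ (e p + 1 ≤ (U p \ D).card) := by
  obtain ⟨D0, A, hAsub, -, hkill, hcard, hsafe⟩ :=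
    kill_phase U e P P.card P ∅ le_rfl (Finset.Subset.refl P)
      (by simp) (by simp)
  have hD0le : D0.card ≤ d := by
    rw [hd]
    exact hcard.trans (Finset.sum_le_sum_of_subset (Finset.sdiff_subset))
  obtain ⟨D, -, hDcard, hsafe', hkill'⟩ :=
    pad_phase U e P m d hsize hm (d - D0.card) D0 A hAsub hsafe hkill (by omega)
  refine ⟨D, hDcard, fun p hp => ?_⟩
  by_cases hpA : p ∈ A
  · exact Or.inr (hsafe' p hpA)
  · refine Or.inl (Finset.sdiff_eq_empty_iff_subset.mpr
      (hkill' p (Finset.mem_sdiff.mpr ⟨hp, hpA⟩)))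

end Comb


lemma crt_components {a b : ℕ} [NeZero a] [NeZero b] (h : a.Coprime b) (x : ZMod (a * b)) :
    ZMod.chineseRemainder h x =
      (ZMod.castHom (dvd_mul_right a b) (ZMod a) x,
       ZMod.castHom (dvd_mul_left b a) (ZMod b) x) := by
  have h0 : (ZMod.chineseRemainder h) x
      = ZMod.castHom (show Nat.lcm a b ∣ a * b by simp [Nat.lcm_dvd_iff]) (ZMod a × ZMod b) x :=
    rfl
  haveI : NeZero (a * b) := ⟨mul_ne_zero (NeZero.ne a) (NeZero.ne b)⟩
  rw [h0, ZMod.castHom_apply, ZMod.castHom_apply, ZMod.castHom_apply]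
  rw [← ZMod.natCast_val x, ← ZMod.natCast_val x, ← ZMod.natCast_val x]
  exact Prod.ext (by simp) (by simp)

lemma tset_pair {p k : ℕ} (h : p.Coprime k) {s : ZMod p} {t : ZMod k}
    (hs : s ∈ Tset p) (ht : t ∈ Tset k) :
    (ZMod.chineseRemainder h).symm (s, t) ∈ Tset (p * k) := by
  obtain ⟨u, hu⟩ := hs
  obtain ⟨v, hv⟩ := ht
  have hval : (((↑u, ↑v) : ZMod p × ZMod k) * ((↑u⁻¹, ↑v⁻¹) : ZMod p × ZMod k)) = 1 := by
    refine Prod.ext ?_ ?_ <;> simp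
  have hval' : (((↑u⁻¹, ↑v⁻¹) : ZMod p × ZMod k) * ((↑u, ↑v) : ZMod p × ZMod k)) = 1 := by
    refine Prod.ext ?_ ?_ <;> simp
  set w : (ZMod p × ZMod k)ˣ := ⟨(↑u, ↑v), (↑u⁻¹, ↑v⁻¹), hval, hval'⟩ with hw
  refine ⟨Units.map ((ZMod.chineseRemainder h).symm : ZMod p × ZMod k →+* ZMod (p * k)).toMonoidHom w, ?_⟩
  rw [Units.coe_map]
  show ((ZMod.chineseRemainder h).symm ((↑u, ↑v) : ZMod p × ZMod k)) ^ 3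
    = (ZMod.chineseRemainder h).symm (s, t)
  rw [← map_pow]
  congr 1
  refine Prod.ext ?_ ?_
  · show ((u : ZMod p) ^ 3 : ZMod p) = s
    exact hu
  · show ((v : ZMod k) ^ 3 : ZMod k) = t
    exact hv

lemma glue : ∀ (n : ℕ), Squarefree n → ∀ {ι : Type} (I : Finset ι) (y : ι → ZMod n),
    (∀ p : ℕ, p.Prime → ∀ (hp : p ∣ n),
      ∃ a : ι → ZMod p, (∀ i ∈ I, a i ∈ Tset p) ∧
        ∑ i ∈ I, a i * (ZMod.castHom hp (ZMod p) (y i)) = 0) →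
    ∃ a : ι → ZMod n, (∀ i ∈ I, a i ∈ Tset n) ∧ ∑ i ∈ I, a i * y i = 0 := by
  intro n
  induction n using Nat.strong_induction_on with
  | _ n ih =>
  intro hsf ι I y hyp
  have hn0 : n ≠ 0 := fun h => by rw [h] at hsf; exact not_squarefree_zero hsf
  by_cases hn1 : n = 1
  · subst hn1
    exact ⟨fun _ => 1, fun i _ => ⟨1, Subsingleton.elim _ _⟩, Subsingleton.elim _ _⟩
  · -- n = p * k with p = minFac n
    obtain ⟨p, k, hpprime, rfl⟩ : ∃ p k : ℕ, p.Prime ∧ n = p * k := by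
      obtain ⟨k, hk⟩ := n.minFac_dvd
      exact ⟨n.minFac, k, Nat.minFac_prime hn1, hk⟩
    have hk0 : k ≠ 0 := fun h => hn0 (by rw [h, mul_zero])
    haveI : Fact p.Prime := ⟨hpprime⟩
    haveI : NeZero p := ⟨hpprime.ne_zero⟩
    haveI : NeZero k := ⟨hk0⟩
    have hpk : ¬ p ∣ k := by
      intro hdvd
      obtain ⟨l, hl⟩ := hdvd
      have : IsUnit p := hsf p (by rw [hl]; ring_nf; exact ⟨l, by ring⟩)
      exact hpprime.one_lt.ne' (Nat.isUnit_iff.mp this)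
    have hco : p.Coprime k := (Nat.Prime.coprime_iff_not_dvd hpprime).mpr hpk
    have hksf : Squarefree k := hsf.squarefree_of_dvd (dvd_mul_left k p)
    have hklt : k < p * k := by
      have := hpprime.two_le
      calc k = 1 * k := (one_mul k).symm
        _ < p * k := by
            apply Nat.mul_lt_mul_of_lt_of_le (by omega) le_rfl
            omega
    -- solution mod p
    obtain ⟨a1, ha1T, ha1sum⟩ := hyp p hpprime (dvd_mul_right p k)
    -- solution mod k via induction
    obtain ⟨a2, ha2T, ha2sum⟩ := ih k hklt hksf I
      (fun i => ZMod.castHom (dvd_mul_left k p) (ZMod k) (y i))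
      (by
        intro q hq hqk
        obtain ⟨aq, haqT, haqsum⟩ := hyp q hq (hqk.trans (dvd_mul_left k p))
        refine ⟨aq, haqT, ?_⟩
        rw [← haqsum]
        refine Finset.sum_congr rfl fun i _ => ?_
        congr 1
        exact RingHom.congr_fun (ZMod.castHom_comp hqk (dvd_mul_left k p)) (y i))
    set e := ZMod.chineseRemainder hco with he
    set a : ι → ZMod (p * k) := fun i => e.symm (a1 i, a2 i) with ha
    refine ⟨a, fun i hi => tset_pair hco (ha1T i hi) (ha2T i hi), ?_⟩
    apply e.injective
    rw [map_sum, map_zero]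
    have : ∀ i ∈ I, e (a i * y i) =
        (a1 i * ZMod.castHom (dvd_mul_right p k) (ZMod p) (y i),
         a2 i * ZMod.castHom (dvd_mul_left k p) (ZMod k) (y i)) := by
      intro i _
      rw [map_mul, ha]
      simp only
      rw [RingEquiv.apply_symm_apply, crt_components hco (y i)]
      rfl
    rw [Finset.sum_congr rfl this]
    refine Prod.ext ?_ ?_
    · simp only [Prod.fst_sum, Prod.fst_zero]
      exact ha1sum
    · simp only [Prod.snd_sum, Prod.snd_zero]
      exact ha2sum

lemma omega_sf (m : ℕ) (hm : Squarefree m) : Omega m = m.primeFactors.card := by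
  have hnd : m.primeFactorsList.Nodup :=
    (Nat.squarefree_iff_nodup_primeFactorsList hm.ne_zero).mp hm
  rw [Omega, ← Nat.toFinset_factors]
  exact (List.toFinset_card_of_nodup hnd).symm

theorem stmt9 (n n1 n2 : ℕ) (h : n = n1 * n2) (hsf : Squarefree n) (hodd : Odd n)
    (h7 : ¬ (7 ∣ n)) (h13 : ¬ (13 ∣ n))
    (h1 : ∀ p : ℕ, p.Prime → p ∣ n1 → p % 3 = 1)
    (h2 : ∀ q : ℕ, q.Prime → q ∣ n2 → q % 3 = 2)
    (m : ℕ) (hm : 3 * n1.primeFactors.card + 2 * n2.primeFactors.card ≤ m)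
    (x : Fin (m + 2 * Omega n1 + Omega n2) → ZMod n) :
    ∃ I : Finset (Fin (m + 2 * Omega n1 + Omega n2)), I.card = m ∧
      ∃ a : Fin (m + 2 * Omega n1 + Omega n2) → ZMod n,
        (∀ i ∈ I, a i ∈ Tset n) ∧ ∑ i ∈ I, a i * x i = 0 := by
  classical
  have hn0 : n ≠ 0 := hsf.ne_zero
  have hn10 : n1 ≠ 0 := fun h0 => hn0 (by rw [h, h0, zero_mul])
  have hn20 : n2 ≠ 0 := fun h0 => hn0 (by rw [h, h0, mul_zero])
  haveI : NeZero n := ⟨hn0⟩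
  have hn2 : ¬ (2 ∣ n) := by
    rcases hodd with ⟨k, hk⟩
    omega
  have hsf1 : Squarefree n1 := hsf.squarefree_of_dvd (h ▸ dvd_mul_right n1 n2)
  have hsf2 : Squarefree n2 := hsf.squarefree_of_dvd (h ▸ dvd_mul_left n2 n1)
  have hPun : n.primeFactors = n1.primeFactors ∪ n2.primeFactors := by
    rw [h]; exact Nat.primeFactors_mul hn10 hn20
  have hmem1 : ∀ p ∈ n1.primeFactors, p.Prime ∧ p ∣ n1 := fun p hp =>
    ⟨Nat.prime_of_mem_primeFactors hp, Nat.dvd_of_mem_primeFactors hp⟩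
  have hmem2 : ∀ p ∈ n2.primeFactors, p.Prime ∧ p ∣ n2 := fun p hp =>
    ⟨Nat.prime_of_mem_primeFactors hp, Nat.dvd_of_mem_primeFactors hp⟩
  have hdisj : Disjoint n1.primeFactors n2.primeFactors := by
    rw [Finset.disjoint_left]
    intro p hp1 hp2
    have e1 := h1 p (hmem1 p hp1).1 (hmem1 p hp1).2
    have e2 := h2 p (hmem2 p hp2).1 (hmem2 p hp2).2
    omega
  set e : ℕ → ℕ := fun p => if p % 3 = 1 then 2 else 1 with he
  have hΩ1 : Omega n1 = n1.primeFactors.card := omega_sf n1 hsf1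
  have hΩ2 : Omega n2 = n2.primeFactors.card := omega_sf n2 hsf2
  have hc1 : ∑ p ∈ n1.primeFactors, e p = 2 * n1.primeFactors.card := by
    have hval : ∀ p ∈ n1.primeFactors, e p = 2 := fun p hp => by
      simp only [he]
      rw [if_pos (h1 p (hmem1 p hp).1 (hmem1 p hp).2)]
    rw [Finset.sum_congr rfl hval, Finset.sum_const, smul_eq_mul, mul_comm]
  have hc2 : ∑ p ∈ n2.primeFactors, e p = n2.primeFactors.card := by
    have hval : ∀ p ∈ n2.primeFactors, e p = 1 := fun p hp => by
      simp only [he]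
      rw [if_neg (by have := h2 p (hmem2 p hp).1 (hmem2 p hp).2; omega)]
    rw [Finset.sum_congr rfl hval, Finset.sum_const, smul_eq_mul, mul_one]
  have hsum_e : ∑ p ∈ n.primeFactors, e p = 2 * Omega n1 + Omega n2 := by
    rw [hPun, Finset.sum_union hdisj, hc1, hc2, hΩ1, hΩ2]
  have hsum_e1 : ∑ p ∈ n.primeFactors, (e p + 1) ≤ m := by
    have : ∑ p ∈ n.primeFactors, (e p + 1)
        = ∑ p ∈ n.primeFactors, e p + n.primeFactors.card := by
      rw [Finset.sum_add_distrib, Finset.sum_const, smul_eq_mul, mul_one]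
    rw [this, hsum_e, hPun, Finset.card_union_of_disjoint hdisj, hΩ1, hΩ2]
    omega
  -- abbreviations
  have hp19 : ∀ p : ℕ, p.Prime → p ∣ n → p % 3 = 1 → 19 ≤ p := by
    intro p pp pdvd pmod
    by_contra hlt
    push_neg at hlt
    have h2p := pp.two_le
    interval_cases p <;>
      first
        | omega
        | exact absurd pp (by norm_num)
        | exact h7 pdvd
        | exact h13 pdvd
  have hq5 : ∀ q : ℕ, q.Prime → q ∣ n → q % 3 = 2 → 5 ≤ q := by
    intro q qq qdvd qmod
    by_contra hlt
    push_neg at hlt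
    have h2q := qq.two_le
    interval_cases q <;>
      first
        | omega
        | exact absurd qq (by norm_num)
        | exact hn2 qdvd
  set U : ℕ → Finset (Fin (m + 2 * Omega n1 + Omega n2)) :=
    fun p => univ.filter (fun i => ((x i).val : ZMod p) ≠ 0) with hUdef
  have hsize : m + (∑ p ∈ n.primeFactors, e p)
      ≤ Fintype.card (Fin (m + 2 * Omega n1 + Omega n2)) := by
    rw [Fintype.card_fin, hsum_e]
    omega
  obtain ⟨D, hDcard, hDcond⟩ :=
    discard_lemma U e n.primeFactors m _ rfl hsum_e1 hsize
  set I : Finset (Fin (m + 2 * Omega n1 + Omega n2)) := univ \ D with hIdef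
  have hIcard : I.card = m := by
    rw [hIdef, Finset.card_sdiff_of_subset (Finset.subset_univ D), Finset.card_univ, Fintype.card_fin,
      hDcard, hsum_e]
    omega
  have hprime_sol : ∀ p : ℕ, p.Prime → ∀ (hp : p ∣ n),
      ∃ a : Fin (m + 2 * Omega n1 + Omega n2) → ZMod p, (∀ i ∈ I, a i ∈ Tset p) ∧
        ∑ i ∈ I, a i * (ZMod.castHom hp (ZMod p) (x i)) = 0 := by
    intro p pp hdvd
    haveI : Fact p.Prime := ⟨pp⟩
    have hpP : p ∈ n.primeFactors := Nat.mem_primeFactors.mpr ⟨pp, hdvd, hn0⟩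
    have hcast : ∀ i, ZMod.castHom hdvd (ZMod p) (x i) = ((x i).val : ZMod p) := by
      intro i
      rw [ZMod.castHom_apply, ZMod.natCast_val]
    have hfilter : (I.filter fun i => (ZMod.castHom hdvd (ZMod p) (x i)) ≠ 0) = U p \ D := by
      ext i
      simp only [hIdef, hUdef, Finset.mem_filter, Finset.mem_sdiff, Finset.mem_univ, true_and,
        hcast i]
      tauto
    have hcond := hDcond p hpP
    rcases Finset.mem_union.mp (hPun ▸ hpP) with hp1 | hp2
    · -- p ≡ 1 (mod 3)
      have pmod := h1 p (hmem1 p hp1).1 (hmem1 p hp1).2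
      have hep : e p = 2 := by simp only [he]; rw [if_pos pmod]
      refine solv1 p pmod (hp19 p pp hdvd pmod) I
        (fun i => ZMod.castHom hdvd (ZMod p) (x i)) ?_
      rw [hfilter]
      rcases hcond with hc | hc
      · exact Or.inl (by rw [hc, Finset.card_empty])
      · exact Or.inr (by omega)
    · -- p ≡ 2 (mod 3)
      have pmod := h2 p (hmem2 p hp2).1 (hmem2 p hp2).2
      have hep : e p = 1 := by simp only [he]; rw [if_neg (by omega)]
      refine solv2 p pmod (hq5 p pp hdvd pmod) I
        (fun i => ZMod.castHom hdvd (ZMod p) (x i)) ?_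
      rw [hfilter]
      rcases hcond with hc | hc
      · exact Or.inl (by rw [hc, Finset.card_empty])
      · exact Or.inr (by omega)
  obtain ⟨a, haT, hasum⟩ := glue n hsf I x hprime_sol
  exact ⟨I, hIcard, a, haT, hasum⟩
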